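/- arXiv:1211.4134 — 2 statements merged into one kernel-verified Lean document; each statement's English description precedes it below -/
import Mathlib

section
/- There exists a sequence (f_α)_{α<ω₁} such that each f_α : α → ω is an injection and for all α < β < ω₁ the set { ξ < α : f_β(ξ) ≠ f_α(ξ) } is finite. -/
noncomputable section

open Set Ordinal

namespace CoherentAux

/-- Finite disagreement below `α`. -/
def Coh (g h : Ordinal → ℕ) (α : Ordinal) : Prop := {ξ : Ordinal | ξ < α ∧ h ξ ≠ g ξ}.Finite

/-- The full invariant at stage `β` relative to the family `fam`. -/
def Good (fam : Ordinal → Ordinal → ℕ) (β : Ordinal) (h : Ordinal → ℕ) : Prop :=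
  Set.InjOn h (Set.Iio β) ∧ (∀ α, α < β → Coh (fam α) h α) ∧ (h '' Set.Iio β)ᶜ.Infinite

lemma good_congr {fam fam' : Ordinal → Ordinal → ℕ} {β h}
    (hf : ∀ α, α < β → fam α = fam' α) (hg : Good fam β h) : Good fam' β h :=
  ⟨hg.1, fun α hα => (hf α hα) ▸ hg.2.1 α hα, hg.2.2⟩

lemma coh_refl (g : Ordinal → ℕ) (α : Ordinal) : Coh g g α := by
  have : {ξ : Ordinal | ξ < α ∧ g ξ ≠ g ξ} = ∅ := by ext; simp
  rw [Coh, this]; exact Set.finite_empty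

lemma coh_symm {g h : Ordinal → ℕ} {α : Ordinal} (hc : Coh g h α) : Coh h g α :=
  hc.subset (fun ξ ⟨h1, h2⟩ => ⟨h1, Ne.symm h2⟩)

lemma coh_trans {g₁ g₂ g₃ : Ordinal → ℕ} {α α' : Ordinal} (hle : α' ≤ α)
    (h12 : Coh g₁ g₂ α) (h23 : Coh g₂ g₃ α) : Coh g₁ g₃ α' := by
  apply Set.Finite.subset (h12.union h23)
  rintro ξ ⟨hξ, hne⟩
  by_cases h : g₂ ξ = g₁ ξ
  · exact Or.inr ⟨lt_of_lt_of_le hξ hle, fun hc => hne (hc.trans h)⟩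
  · exact Or.inl ⟨lt_of_lt_of_le hξ hle, h⟩

lemma coh_mono {g h : Ordinal → ℕ} {α α' : Ordinal} (hle : α' ≤ α) (hc : Coh g h α) :
    Coh g h α' :=
  hc.subset (fun ξ ⟨h1, h2⟩ => ⟨lt_of_lt_of_le h1 hle, h2⟩)

/-- A function finitely-agreeing with a co-infinite-range injection has co-infinite range. -/
lemma coinf_of_coh {g h : Ordinal → ℕ} {α : Ordinal} (hg : (g '' Set.Iio α)ᶜ.Infinite)
    (hc : Coh g h α) : (h '' Set.Iio α)ᶜ.Infinite := by
  apply ((hg.diff (hc.image h)).mono)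
  rintro m ⟨hm1, hm2⟩ ⟨ξ, hξ, rfl⟩
  by_cases h' : h ξ = g ξ
  · exact hm1 ⟨ξ, hξ, h'.symm⟩
  · exact hm2 ⟨ξ, ⟨hξ, h'⟩, rfl⟩

lemma fresh_exists {S : Set ℕ} (hS : Sᶜ.Infinite) {T : Set ℕ} (hT : T.Finite) :
    ∃ n, n ∉ S ∧ n ∉ T := by
  obtain ⟨n, hn1, hn2⟩ := (hS.diff hT).nonempty
  exact ⟨n, hn1, hn2⟩

lemma exists_injOn_fresh {B : Set Ordinal} (hB : B.Finite) {C : Set ℕ} (hC : C.Infinite) :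
    ∃ φ : Ordinal → ℕ, Set.InjOn φ B ∧ ∀ ξ ∈ B, φ ξ ∈ C := by
  obtain ⟨ψ, hψ⟩ := Set.countable_iff_exists_injective.mp hB.countable
  let e := hC.natEmbedding
  classical
  refine ⟨fun ξ => if h : ξ ∈ B then (e (ψ ⟨ξ, h⟩) : ℕ) else 0, ?_, ?_⟩
  · intro ξ₁ h₁ ξ₂ h₂ heq
    simp only [dif_pos h₁, dif_pos h₂] at heq
    have := hψ (e.injective (Subtype.ext heq))
    exact congrArg Subtype.val this
  · intro ξ h
    simp only [dif_pos h]
    exact (e (ψ ⟨ξ, h⟩)).2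

lemma countable_Iio {β : Ordinal} (hβ : β < (Cardinal.aleph 1).ord) :
    (Set.Iio β).Countable := by
  rw [Cardinal.countable_iff_lt_aleph_one, Ordinal.mk_Iio_ordinal]
  exact Cardinal.lift_lt_aleph_one.mpr (Cardinal.lt_ord.mp hβ)

lemma exists_cofinal_seq {β : Ordinal} (hβ : β < (Cardinal.aleph 1).ord) (hlim : Order.IsSuccLimit β) :
    ∃ α : ℕ → Ordinal, StrictMono α ∧ (∀ n, α n < β) ∧ ∀ ξ < β, ∃ n, ξ < α n := by
  obtain ⟨e, he⟩ := (countable_Iio hβ).exists_eq_range ⟨0, hlim.pos⟩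
  have hee : ∀ n, e n < β := fun n => by
    have : e n ∈ Set.Iio β := he ▸ Set.mem_range_self n
    exact this
  set α : ℕ → Ordinal := fun n => Nat.rec (e 0 + 1) (fun n ih => max (ih + 1) (e (n + 1) + 1)) n
    with hα
  have hltβ : ∀ n, α n < β := by
    intro n; induction n with
    | zero =>
        show e 0 + 1 < β
        rw [add_one_eq_succ]; exact hlim.succ_lt (hee 0)
    | succ n ihn =>
        show max (α n + 1) (e (n + 1) + 1) < β
        refine max_lt ?_ ?_
        · rw [add_one_eq_succ]; exact hlim.succ_lt ihn
        · rw [add_one_eq_succ]; exact hlim.succ_lt (hee (n + 1))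
  have hmono : StrictMono α := by
    apply strictMono_nat_of_lt_succ
    intro n
    show α n < max (α n + 1) (e (n + 1) + 1)
    calc α n < α n + 1 := lt_add_one _
    _ ≤ max (α n + 1) (e (n + 1) + 1) := le_max_left _ _
  refine ⟨α, hmono, hltβ, ?_⟩
  intro ξ hξ
  have : ξ ∈ Set.range e := he ▸ hξ
  obtain ⟨n, rfl⟩ := this
  refine ⟨n, ?_⟩
  cases n with
  | zero => exact lt_add_one _
  | succ m =>
      show e (m + 1) < max (α m + 1) (e (m + 1) + 1)
      exact lt_of_lt_of_le (lt_add_one _) (le_max_right _ _)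

lemma limit_step {fam : Ordinal → Ordinal → ℕ} {A A' : Ordinal} (hAA : A < A')
    (hgood : Good fam A' (fam A'))
    {h : Ordinal → ℕ} {R : Finset ℕ}
    (hinj : Set.InjOn h (Set.Iio A)) (hcoh : Coh (fam A) h A)
    (hR : ∀ ξ < A, h ξ ∉ R) :
    ∃ h' : Ordinal → ℕ, ∃ R' : Finset ℕ,
      Set.InjOn h' (Set.Iio A') ∧ Coh (fam A') h' A' ∧ (∀ ξ < A', h' ξ ∉ R') ∧
      (∀ ξ < A, h' ξ = h ξ) ∧ R ⊆ R' ∧ R.card < R'.card := by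
  classical
  set g' : Ordinal → ℕ := fam A' with hg'def
  have hg'inj : Set.InjOn g' (Set.Iio A') := hgood.1
  have hg'coh : Coh (fam A) g' A := hgood.2.1 A hAA
  have hg'coinf : (g' '' Set.Iio A')ᶜ.Infinite := hgood.2.2
  -- disagreement of h with g' below A
  set D' : Set Ordinal := {ξ : Ordinal | ξ < A ∧ h ξ ≠ g' ξ} with hD'def
  have hD'fin : D'.Finite := coh_trans (le_refl A) (coh_symm hg'coh) hcoh
  -- bad set
  set B : Set Ordinal := {ξ : Ordinal | A ≤ ξ ∧ ξ < A' ∧ g' ξ ∈ h '' D' ∪ ↑R} with hBdef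
  have hBsub : B ⊆ Set.Iio A' := fun ξ hξ => hξ.2.1
  have hBfin : B.Finite := by
    have himg : (g' '' B).Finite := by
      apply Set.Finite.subset ((hD'fin.image h).union R.finite_toSet)
      rintro m ⟨ξ, hξ, rfl⟩
      exact hξ.2.2
    exact himg.of_finite_image (hg'inj.mono hBsub)
  set T : Set ℕ := g' '' Set.Iio A' ∪ (h '' D' ∪ ↑R) with hTdef
  have hTc : Tᶜ.Infinite := by
    apply (hg'coinf.diff ((hD'fin.image h).union R.finite_toSet)).mono
    rintro m ⟨hm1, hm2⟩ hm
    rcases hm with hm | hm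
    · exact hm1 hm
    · exact hm2 hm
  obtain ⟨φ, hφinj, hφC⟩ := exists_injOn_fresh hBfin hTc
  set h' : Ordinal → ℕ := fun ξ => if ξ < A then h ξ else if ξ ∈ B then φ ξ else g' ξ with hh'def
  have f1 : ∀ ξ, ξ < A → h' ξ = h ξ := fun ξ hc => if_pos hc
  have f2 : ∀ ξ, ξ ∈ B → h' ξ = φ ξ := fun ξ hc => by
    rw [hh'def]; simp only [if_neg (not_lt.mpr hc.1), if_pos hc]
  have f3 : ∀ ξ, ¬ ξ < A → ξ ∉ B → h' ξ = g' ξ := fun ξ hc1 hc2 => by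
    rw [hh'def]; simp only [if_neg hc1, if_neg hc2]
  have m1 : ∀ ξ, ξ < A → h' ξ ∈ T := by
    intro ξ hξ
    rw [f1 ξ hξ]
    by_cases hd : h ξ = g' ξ
    · exact Or.inl ⟨ξ, hξ.trans hAA, hd.symm⟩
    · exact Or.inr (Or.inl ⟨ξ, ⟨hξ, hd⟩, rfl⟩)
  have m2 : ∀ ξ, ξ ∈ B → h' ξ ∈ Tᶜ := fun ξ hξ => (f2 ξ hξ) ▸ hφC ξ hξ
  have m3 : ∀ ξ, ¬ ξ < A → ξ < A' → ξ ∉ B → h' ξ ∈ T := fun ξ hc1 hc2 hc3 =>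
    (f3 ξ hc1 hc3) ▸ Or.inl ⟨ξ, hc2, rfl⟩
  have hcoh' : Coh g' h' A' := by
    apply Set.Finite.subset (hD'fin.union hBfin)
    rintro ξ ⟨hξ, hne⟩
    by_cases hc1 : ξ < A
    · exact Or.inl ⟨hc1, (f1 ξ hc1) ▸ hne⟩
    · by_cases hc2 : ξ ∈ B
      · exact Or.inr hc2
      · exact absurd (f3 ξ hc1 hc2) hne
  have cross : ∀ ξ₁ ξ₂, ξ₁ < A → ¬ ξ₂ < A → ξ₂ < A' → ξ₂ ∉ B → h ξ₁ = g' ξ₂ → False := by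
    intro ξ₁ ξ₂ c1 c2 c3 c4 heq
    by_cases hd : h ξ₁ = g' ξ₁
    · have : ξ₁ = ξ₂ := hg'inj (Set.mem_Iio.2 (c1.trans hAA)) (Set.mem_Iio.2 c3)
        (hd.symm.trans heq)
      exact c2 (this ▸ c1)
    · exact c4 ⟨not_lt.1 c2, c3, Or.inl ⟨ξ₁, ⟨c1, hd⟩, heq⟩⟩
  have hinj' : Set.InjOn h' (Set.Iio A') := by
    intro ξ₁ hm1' ξ₂ hm2' heq
    have hx1 : ξ₁ < A' := hm1'
    have hx2 : ξ₂ < A' := hm2'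
    by_cases c1 : ξ₁ < A <;> by_cases c2 : ξ₂ < A
    · rw [f1 ξ₁ c1, f1 ξ₂ c2] at heq
      exact hinj (Set.mem_Iio.2 c1) (Set.mem_Iio.2 c2) heq
    · by_cases b2 : ξ₂ ∈ B
      · exact absurd (heq ▸ m1 ξ₁ c1) (m2 ξ₂ b2)
      · exact absurd heq (fun heq' => cross ξ₁ ξ₂ c1 c2 hx2 b2
          ((f1 ξ₁ c1).symm.trans (heq'.trans (f3 ξ₂ c2 b2))))
    · by_cases b1 : ξ₁ ∈ B
      · exact absurd (heq.symm ▸ m1 ξ₂ c2) (m2 ξ₁ b1)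
      · exact absurd heq.symm (fun heq' => cross ξ₂ ξ₁ c2 c1 hx1 b1
          ((f1 ξ₂ c2).symm.trans (heq'.trans (f3 ξ₁ c1 b1))))
    · by_cases b1 : ξ₁ ∈ B <;> by_cases b2 : ξ₂ ∈ B
      · rw [f2 ξ₁ b1, f2 ξ₂ b2] at heq
        exact hφinj b1 b2 heq
      · exact absurd (heq.symm ▸ m3 ξ₂ c2 hx2 b2) (m2 ξ₁ b1)
      · exact absurd (heq ▸ m3 ξ₁ c1 hx1 b1) (m2 ξ₂ b2)
      · rw [f3 ξ₁ c1 b1, f3 ξ₂ c2 b2] at heq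
        exact hg'inj (Set.mem_Iio.2 hx1) (Set.mem_Iio.2 hx2) heq
  have hcoinf' : (h' '' Set.Iio A')ᶜ.Infinite := coinf_of_coh hg'coinf hcoh'
  obtain ⟨r, hr1, hr2⟩ := fresh_exists hcoinf' R.finite_toSet
  refine ⟨h', insert r R, hinj', hcoh', ?_, f1, Finset.subset_insert r R, ?_⟩
  · intro ξ hξ
    rw [Finset.mem_insert]
    rintro (hc | hc)
    · exact hr1 ⟨ξ, hξ, hc⟩
    · by_cases c1 : ξ < A
      · exact hR ξ c1 ((f1 ξ c1) ▸ hc)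
      · by_cases b1 : ξ ∈ B
        · exact (m2 ξ b1) (Or.inr (Or.inr ((f2 ξ b1) ▸ hc)))
        · exact b1 ⟨not_lt.1 c1, hξ, Or.inr ((f3 ξ c1 b1) ▸ hc)⟩
  · rw [Finset.card_insert_of_notMem hr2]
    exact Nat.lt_succ_self _

lemma key_limit {fam : Ordinal → Ordinal → ℕ} {β : Ordinal} (hβ : β < (Cardinal.aleph 1).ord)
    (hlim : Order.IsSuccLimit β) (ih : ∀ α, α < β → Good fam α (fam α)) : ∃ h, Good fam β h := by
  classical
  obtain ⟨α, hmono, hltβ, hcof⟩ := exists_cofinal_seq hβ hlim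
  set Inv : ℕ → (Ordinal → ℕ) × Finset ℕ → Prop := fun n p =>
    Set.InjOn p.1 (Set.Iio (α n)) ∧ Coh (fam (α n)) p.1 (α n) ∧ ∀ ξ < α n, p.1 ξ ∉ p.2
    with hInvdef
  have stepEx : ∀ n p, Inv n p → ∃ q : (Ordinal → ℕ) × Finset ℕ, Inv (n + 1) q ∧
      (∀ ξ < α n, q.1 ξ = p.1 ξ) ∧ p.2 ⊆ q.2 ∧ p.2.card < q.2.card := by
    intro n p hp
    obtain ⟨h', R', i1, i2, i3, i4, i5, i6⟩ :=
      limit_step (hmono (Nat.lt_succ_self n)) (ih (α (n + 1)) (hltβ (n + 1))) hp.1 hp.2.1 hp.2.2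
    exact ⟨(h', R'), ⟨i1, i2, i3⟩, i4, i5, i6⟩
  set s : ℕ → (Ordinal → ℕ) × Finset ℕ := fun n =>
    Nat.rec (⟨fam (α 0), ∅⟩ : (Ordinal → ℕ) × Finset ℕ)
      (fun n q => if hq : Inv n q then Classical.choose (stepEx n q hq) else q) n with hsdef
  have main : ∀ n, Inv n (s n) := by
    intro n; induction n with
    | zero =>
        refine ⟨(ih (α 0) (hltβ 0)).1, coh_refl _ _, ?_⟩
        intro ξ _ hc
        exact absurd hc (Finset.notMem_empty _)
    | succ n ihn =>
        have hdef : s (n + 1) =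
            if hq : Inv n (s n) then Classical.choose (stepEx n (s n) hq) else s n := rfl
        rw [hdef, dif_pos ihn]
        exact (Classical.choose_spec (stepEx n (s n) ihn)).1
  have hstep : ∀ n, (∀ ξ < α n, (s (n + 1)).1 ξ = (s n).1 ξ) ∧ (s n).2 ⊆ (s (n + 1)).2 ∧
      (s n).2.card < (s (n + 1)).2.card := by
    intro n
    have hdef : s (n + 1) =
        if hq : Inv n (s n) then Classical.choose (stepEx n (s n) hq) else s n := rfl
    rw [hdef, dif_pos (main n)]
    exact (Classical.choose_spec (stepEx n (s n) (main n))).2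
  have hagree : ∀ n m, n ≤ m → ∀ ξ, ξ < α n → (s m).1 ξ = (s n).1 ξ := by
    intro n m hnm
    induction m, hnm using Nat.le_induction with
    | base => intro ξ _; rfl
    | succ m hm ihm =>
        intro ξ hξ
        rw [(hstep m).1 ξ (hξ.trans_le (hmono.monotone hm)), ihm ξ hξ]
  have Rsub : ∀ n m, n ≤ m → (s n).2 ⊆ (s m).2 := by
    intro n m hnm
    induction m, hnm using Nat.le_induction with
    | base => exact Finset.Subset.refl _
    | succ m hm ihm => exact ihm.trans (hstep m).2.1
  have Rcard : ∀ n, n ≤ (s n).2.card := by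
    intro n; induction n with
    | zero => exact Nat.zero_le _
    | succ n ihn => exact Nat.succ_le_of_lt (lt_of_le_of_lt ihn (hstep n).2.2)
  set g : Ordinal → ℕ := fun ξ => if hξ : ∃ n, ξ < α n then (s hξ.choose).1 ξ else 0 with hgdef
  have hg : ∀ ξ n, ξ < α n → g ξ = (s n).1 ξ := by
    intro ξ n hξ
    have hex : ∃ k, ξ < α k := ⟨n, hξ⟩
    have h1 : g ξ = (s hex.choose).1 ξ := dif_pos hex
    have hk := hex.choose_spec
    rcases le_total hex.choose n with hkn | hnk
    · exact h1.trans (hagree hex.choose n hkn ξ hk).symm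
    · exact h1.trans (hagree n hex.choose hnk ξ hξ)
  refine ⟨g, ?_, ?_, ?_⟩
  · intro ξ₁ h1 ξ₂ h2 heq
    obtain ⟨n₁, hn₁⟩ := hcof ξ₁ h1
    obtain ⟨n₂, hn₂⟩ := hcof ξ₂ h2
    have hx1 : ξ₁ < α (max n₁ n₂) := hn₁.trans_le (hmono.monotone (le_max_left _ _))
    have hx2 : ξ₂ < α (max n₁ n₂) := hn₂.trans_le (hmono.monotone (le_max_right _ _))
    rw [hg ξ₁ _ hx1, hg ξ₂ _ hx2] at heq
    exact (main (max n₁ n₂)).1 (Set.mem_Iio.2 hx1) (Set.mem_Iio.2 hx2) heq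
  · intro α' hα'
    obtain ⟨n, hn⟩ := hcof α' hα'
    apply Set.Finite.subset (((main n).2.1).union ((ih (α n) (hltβ n)).2.1 α' hn))
    rintro ξ ⟨hξ, hne⟩
    have hξn : ξ < α n := hξ.trans hn
    rw [hg ξ n hξn] at hne
    by_cases hd : fam (α n) ξ = fam α' ξ
    · exact Or.inl ⟨hξn, fun hc => hne (hc.trans hd)⟩
    · exact Or.inr ⟨hξ, hd⟩
  · have hUsub : (⋃ n, ((s n).2 : Set ℕ)) ⊆ (g '' Set.Iio β)ᶜ := by
      rintro m hm ⟨ξ, hξ, rfl⟩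
      rw [Set.mem_iUnion] at hm
      obtain ⟨n, hn⟩ := hm
      obtain ⟨k, hk⟩ := hcof ξ hξ
      have hkn : ξ < α (max n k) := hk.trans_le (hmono.monotone (le_max_right n k))
      apply (main (max n k)).2.2 ξ hkn
      rw [← hg ξ _ hkn]
      exact Rsub n (max n k) (le_max_left n k) hn
    have hUinf : (⋃ n, ((s n).2 : Set ℕ)).Infinite := by
      intro hfin
      have hsub : ∀ n, (s n).2 ⊆ hfin.toFinset := fun n x hx =>
        hfin.mem_toFinset.2 (Set.mem_iUnion.2 ⟨n, hx⟩)
      have h1 := Rcard (hfin.toFinset.card + 1)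
      have h2 := Finset.card_le_card (hsub (hfin.toFinset.card + 1))
      omega
    exact hUinf.mono hUsub

lemma key_zero {fam : Ordinal → Ordinal → ℕ} : ∃ h, Good fam 0 h := by
  refine ⟨fun _ => 0, ?_, ?_, ?_⟩
  · intro ξ hξ; exact absurd hξ (by simp : ¬ ξ < (0 : Ordinal))
  · intro α hα; exact absurd hα (by simp : ¬ α < (0 : Ordinal))
  · have : Set.Iio (0 : Ordinal) = ∅ := by ext ξ; simp
    rw [this, Set.image_empty, Set.compl_empty]
    exact Set.infinite_univ

lemma key_succ {fam : Ordinal → Ordinal → ℕ} {γ : Ordinal}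
    (ih : Good fam γ (fam γ)) : ∃ h, Good fam (Order.succ γ) h := by
  classical
  obtain ⟨n₀, hn₀, -⟩ := fresh_exists ih.2.2 Set.finite_empty
  refine ⟨fun ξ => if ξ = γ then n₀ else fam γ ξ, ?_, ?_, ?_⟩
  · intro ξ₁ h1 ξ₂ h2 heq
    change (if ξ₁ = γ then n₀ else fam γ ξ₁) = (if ξ₂ = γ then n₀ else fam γ ξ₂) at heq
    have h1' : ξ₁ ≤ γ := Order.lt_succ_iff.mp h1
    have h2' : ξ₂ ≤ γ := Order.lt_succ_iff.mp h2
    by_cases c1 : ξ₁ = γ <;> by_cases c2 : ξ₂ = γ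
    · exact c1.trans c2.symm
    · rw [if_pos c1, if_neg c2] at heq
      exact absurd ⟨ξ₂, lt_of_le_of_ne h2' c2, heq.symm⟩ hn₀
    · rw [if_neg c1, if_pos c2] at heq
      exact absurd ⟨ξ₁, lt_of_le_of_ne h1' c1, heq⟩ hn₀
    · rw [if_neg c1, if_neg c2] at heq
      exact ih.1 (Set.mem_Iio.2 (lt_of_le_of_ne h1' c1)) (Set.mem_Iio.2 (lt_of_le_of_ne h2' c2)) heq
  · intro α hα
    have hαγ : α ≤ γ := Order.lt_succ_iff.mp hα
    have hsub : {ξ : Ordinal | ξ < α ∧ (if ξ = γ then n₀ else fam γ ξ) ≠ fam α ξ} ⊆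
        {ξ : Ordinal | ξ < α ∧ fam γ ξ ≠ fam α ξ} := by
      rintro ξ ⟨hξ, hne⟩
      have : ξ ≠ γ := fun hc => absurd (hc ▸ hξ) (not_lt.2 (hc ▸ hαγ))
      rw [if_neg this] at hne
      exact ⟨hξ, hne⟩
    rcases eq_or_lt_of_le hαγ with rfl | hlt
    · apply Set.Finite.subset (coh_refl (fam α) α) hsub
    · exact Set.Finite.subset (ih.2.1 α hlt) hsub
  · have hsub : (fun ξ => if ξ = γ then n₀ else fam γ ξ) '' Set.Iio (Order.succ γ) ⊆
        insert n₀ (fam γ '' Set.Iio γ) := by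
      rintro m ⟨ξ, hξ, rfl⟩
      show (if ξ = γ then n₀ else fam γ ξ) ∈ _
      by_cases c : ξ = γ
      · rw [if_pos c]; exact Set.mem_insert _ _
      · rw [if_neg c]
        exact Set.mem_insert_of_mem _ ⟨ξ, lt_of_le_of_ne (Order.lt_succ_iff.mp hξ) c, rfl⟩
    apply (ih.2.2.diff (Set.finite_singleton n₀)).mono
    intro m hm
    rw [Set.mem_compl_iff]
    intro hc
    rcases hsub hc with hc' | hc'
    · exact hm.2 hc'
    · exact hm.1 hc'

lemma key {fam : Ordinal → Ordinal → ℕ} {β : Ordinal} (hβ : β < (Cardinal.aleph 1).ord)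
    (ih : ∀ α, α < β → Good fam α (fam α)) : ∃ h, Good fam β h := by
  rcases Ordinal.zero_or_succ_or_isSuccLimit β with rfl | ⟨γ, rfl⟩ | hlim
  · exact key_zero
  · exact key_succ (ih γ (Order.lt_succ γ))
  · exact key_limit hβ hlim ih

/-- The recursively defined coherent family. -/
noncomputable def F : ∀ β : Ordinal, (∀ α, α < β → (Ordinal → ℕ)) → (Ordinal → ℕ) := fun β rec =>
  letI := Classical.propDecidable
    (∃ h, Good (fun α => if hα : α < β then rec α hα else fun _ => 0) β h)
  if H : ∃ h, Good (fun α => if hα : α < β then rec α hα else fun _ => 0) β h then H.choose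
  else fun _ => 0

noncomputable def f : Ordinal → Ordinal → ℕ := Ordinal.lt_wf.fix F

lemma f_good : ∀ β : Ordinal, β < (Cardinal.aleph 1).ord → Good f β (f β) := by
  intro β
  induction β using Ordinal.lt_wf.induction with
  | _ β IH =>
    intro hβ
    have hfamEq : ∀ α, α < β →
        (fun α' => if hα' : α' < β then f α' else fun _ => 0) α = f α :=
      fun α hα => dif_pos hα
    have ihfam : ∀ α, α < β →
        Good (fun α' => if hα' : α' < β then f α' else fun _ => 0) α
          ((fun α' => if hα' : α' < β then f α' else fun _ => 0) α) := by
      intro α hα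
      rw [hfamEq α hα]
      apply good_congr (fun α' hα' => (hfamEq α' (hα'.trans hα)).symm)
      exact IH α hα (hα.trans hβ)
    have H : ∃ h, Good (fun α' => if hα' : α' < β then f α' else fun _ => 0) β h :=
      key hβ ihfam
    have hfix : f β = F β (fun α _ => f α) := Ordinal.lt_wf.fix_eq F β
    have hGood : Good (fun α' => if hα' : α' < β then f α' else fun _ => 0) β (f β) := by
      rw [hfix]
      unfold F
      rw [dif_pos H]
      exact H.choose_spec
    exact good_congr hfamEq hGood

end CoherentAux

/-- **Lemma.** There is a coherent sequence of injections `f_α : α → ω` (α < ω₁):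
each `f_α` is injective on `α`, and for `α < β < ω₁` the functions `f_β` and `f_α`
agree at all but finitely many points of `α`. -/
theorem exists_coherent_injections :
    ∃ f : Ordinal → Ordinal → ℕ,
      (∀ α < (Cardinal.aleph 1).ord, Set.InjOn (f α) (Set.Iio α)) ∧
      (∀ α β : Ordinal, α < β → β < (Cardinal.aleph 1).ord →
        {ξ : Ordinal | ξ < α ∧ f β ξ ≠ f α ξ}.Finite) := by
  refine ⟨CoherentAux.f, ?_, ?_⟩
  · intro α hα
    exact (CoherentAux.f_good α hα).1
  · intro α β hαβ hβ
    exact (CoherentAux.f_good β hβ).2.1 α hαβ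

end
end

section
/- Let κ be an infinite cardinal. Every automorphism Φ of the Boolean algebra P(ω)/fin extends to an automorphism Ψ of P(κ)/fin, meaning Ψ([A]) = Φ([A]) for every A ⊆ ω, where [A] denotes the class of A modulo finite sets and P(ω)/fin is identified with a subalgebra of P(κ)/fin via [A] ↦ [A]. Moreover, if Φ is nontrivial — i.e., there is no e : ω → ω with Φ([A]) = [e⁻¹[A]] for all A ⊆ ω — then every automorphism Ψ of P(κ)/fin extending Φ is nontrivial, i.e., there is no e : κ → κ with Ψ([A]) = [e⁻¹[A]] for all A ⊆ κ. -/
noncomputable section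

open scoped symmDiff

/-- The Boolean algebra P(X)/fin, as the quotient of the powerset of `X` by the
(equivalence) relation "the symmetric difference is finite". -/
def PFin (X : Type*) : Type _ :=
  Quot (fun A B : Set X => (A ∆ B).Finite)

/-- The quotient map P(X) → P(X)/fin. -/
def pmk {X : Type*} (A : Set X) : PFin X := Quot.mk _ A

/-- `Φ` is an automorphism of the Boolean algebra P(X)/fin: it is bijective and
respects, on representatives, union, intersection and complementation. -/
def IsBAAut {X : Type*} (Φ : PFin X → PFin X) : Prop :=
  Function.Bijective Φ ∧
  (∀ A B A' B' : Set X, Φ (pmk A) = pmk A' → Φ (pmk B) = pmk B' →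
      Φ (pmk (A ∪ B)) = pmk (A' ∪ B') ∧ Φ (pmk (A ∩ B)) = pmk (A' ∩ B')) ∧
  (∀ A A' : Set X, Φ (pmk A) = pmk A' → Φ (pmk Aᶜ) = pmk A'ᶜ)

/-- `Φ` is a trivial automorphism of P(X)/fin: it is induced by a function `e : X → X`
via `[A] ↦ [e⁻¹[A]]`. -/
def IsTrivialAut {X : Type*} (Φ : PFin X → PFin X) : Prop :=
  ∃ e : X → X, ∀ A : Set X, Φ (pmk A) = pmk (e ⁻¹' A)

/-- The underlying set of the cardinal κ: the ordinals below κ. -/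
abbrev KType (κ : Cardinal.{0}) : Type 1 := ↥(Set.Iio κ.ord)

/-- The inclusion P(ω) → P(κ) induced by ω ⊆ κ (identifying `n < ω` with the
corresponding ordinal below κ). -/
def inclSet (κ : Cardinal.{0}) (A : Set ℕ) : Set (KType κ) :=
  {x : KType κ | ∃ n ∈ A, ((n : ℕ) : Ordinal) = (x : Ordinal)}

/-- `Ψ` extends `Φ` along the identification of P(ω)/fin with a subalgebra of P(κ)/fin:
`Ψ([A]) = Φ([A])` for every `A ⊆ ω`. -/
def Extends (κ : Cardinal.{0}) (Φ : PFin ℕ → PFin ℕ)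
    (Ψ : PFin (KType κ) → PFin (KType κ)) : Prop :=
  ∀ A A' : Set ℕ, Φ (pmk A) = pmk A' → Ψ (pmk (inclSet κ A)) = pmk (inclSet κ A')

namespace AutPFinExt

variable {X : Type*}

theorem finRel_equivalence (X : Type*) :
    Equivalence (fun A B : Set X => (A ∆ B).Finite) where
  refl A := by simp [symmDiff_self]
  symm {A B} h := by rwa [symmDiff_comm]
  trans {A B C} h1 h2 := (h1.union h2).subset (symmDiff_triangle A B C)

theorem pmk_eq {A B : Set X} : pmk A = pmk B ↔ (A ∆ B).Finite := by
  show (Quot.mk _ A : Quot (fun A B : Set X => (A ∆ B).Finite)) = Quot.mk _ B ↔ _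
  rw [Quot.eq]
  exact (finRel_equivalence X).eqvGen_iff

def prep (x : PFin X) : Set X := Quot.out x

theorem pmk_prep (x : PFin X) : pmk (prep x) = x := Quot.out_eq x

theorem pmk_union_congr {S T S' T' : Set X} (h1 : pmk S = pmk S') (h2 : pmk T = pmk T') :
    pmk (S ∪ T) = pmk (S' ∪ T') := by
  rw [pmk_eq] at h1 h2 ⊢
  refine (h1.union h2).subset fun x hx => ?_
  simp only [Set.mem_symmDiff, Set.mem_union] at hx ⊢
  tauto

theorem pmk_inter_congr {S T S' T' : Set X} (h1 : pmk S = pmk S') (h2 : pmk T = pmk T') :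
    pmk (S ∩ T) = pmk (S' ∩ T') := by
  rw [pmk_eq] at h1 h2 ⊢
  refine (h1.union h2).subset fun x hx => ?_
  simp only [Set.mem_symmDiff, Set.mem_inter_iff, Set.mem_union] at hx ⊢
  tauto

theorem pmk_compl_congr {S S' : Set X} (h : pmk S = pmk S') :
    pmk Sᶜ = pmk S'ᶜ := by
  rw [pmk_eq] at h ⊢
  rwa [compl_symmDiff_compl]

section Ext

variable {ι : ℕ → X}

/-- The extension construction. -/
def extFun (hι : Function.Injective ι) (F : PFin ℕ → PFin ℕ) : PFin X → PFin X :=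
  Quot.lift
    (fun S => pmk (ι '' prep (F (pmk (ι ⁻¹' S))) ∪ (S \ Set.range ι)))
    (by
      intro S T h
      have h1 : pmk (ι ⁻¹' S) = pmk (ι ⁻¹' T) := by
        rw [pmk_eq, ← Set.preimage_symmDiff]
        exact h.preimage hι.injOn
      rw [h1]
      apply pmk_union_congr rfl
      rw [pmk_eq]
      refine h.subset fun x hx => ?_
      simp only [Set.mem_symmDiff, Set.mem_diff] at hx ⊢
      tauto)

theorem extFun_mk (hι : Function.Injective ι) (F : PFin ℕ → PFin ℕ) (S : Set X) :
    extFun hι F (pmk S) = pmk (ι '' prep (F (pmk (ι ⁻¹' S))) ∪ (S \ Set.range ι)) := rfl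

theorem pmk_union_left (hι : Function.Injective ι) {C C' : Set ℕ}
    (h : pmk C = pmk C') (D : Set X) :
    pmk (ι '' C ∪ D) = pmk (ι '' C' ∪ D) := by
  apply pmk_union_congr _ rfl
  rw [pmk_eq] at h ⊢
  rw [← Set.image_symmDiff hι]
  exact h.image ι

theorem split_union (A' B' : Set ℕ) (S T : Set X) :
    (ι '' A' ∪ S \ Set.range ι) ∪ (ι '' B' ∪ T \ Set.range ι) =
      ι '' (A' ∪ B') ∪ (S ∪ T) \ Set.range ι := by
  rw [Set.image_union]
  ext x
  simp only [Set.mem_union, Set.mem_diff]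
  tauto

theorem split_inter (hι : Function.Injective ι) (A' B' : Set ℕ) (S T : Set X) :
    (ι '' A' ∪ S \ Set.range ι) ∩ (ι '' B' ∪ T \ Set.range ι) =
      ι '' (A' ∩ B') ∪ (S ∩ T) \ Set.range ι := by
  ext x
  by_cases hx : x ∈ Set.range ι
  · obtain ⟨n, rfl⟩ := hx
    simp [Set.mem_image, hι.eq_iff, Set.mem_range_self]
  · have h1 : ∀ C : Set ℕ, x ∉ ι '' C := fun C hC =>
      hx (Set.image_subset_range ι C hC)
    simp only [Set.mem_inter_iff, Set.mem_union, Set.mem_diff]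
    have := h1 A'; have := h1 B'; have := h1 (A' ∩ B')
    tauto

theorem split_compl (hι : Function.Injective ι) (A' : Set ℕ) (S : Set X) :
    (ι '' A' ∪ S \ Set.range ι)ᶜ = ι '' A'ᶜ ∪ Sᶜ \ Set.range ι := by
  ext x
  by_cases hx : x ∈ Set.range ι
  · obtain ⟨n, rfl⟩ := hx
    simp [Set.mem_image, hι.eq_iff, Set.mem_range_self]
  · have h1 : ∀ C : Set ℕ, x ∉ ι '' C := fun C hC =>
      hx (Set.image_subset_range ι C hC)
    simp only [Set.mem_compl_iff, Set.mem_union, Set.mem_diff]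
    have := h1 A'; have := h1 A'ᶜ
    tauto

theorem preimage_split (hι : Function.Injective ι) (A' : Set ℕ) (S : Set X) :
    ι ⁻¹' (ι '' A' ∪ S \ Set.range ι) = A' := by
  rw [Set.preimage_union, Set.preimage_image_eq A' hι]
  have : ι ⁻¹' (S \ Set.range ι) = ∅ := by
    ext n; simp [Set.mem_range_self]
  rw [this, Set.union_empty]

theorem diff_split (A' : Set ℕ) (S : Set X) :
    (ι '' A' ∪ S \ Set.range ι) \ Set.range ι = S \ Set.range ι := by
  ext x
  simp only [Set.mem_diff, Set.mem_union]
  constructor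
  · rintro ⟨h | h, hx⟩
    · exact absurd (Set.image_subset_range ι A' h) hx
    · exact h
  · exact fun h => ⟨Or.inr h, h.2⟩

theorem repr_split (S : Set X) :
    ι '' (ι ⁻¹' S) ∪ S \ Set.range ι = S := by
  rw [Set.image_preimage_eq_inter_range]
  ext x
  simp only [Set.mem_union, Set.mem_inter_iff, Set.mem_diff, Set.mem_range]
  tauto

theorem ext_leftInverse (hι : Function.Injective ι) {F G : PFin ℕ → PFin ℕ}
    (hGF : Function.LeftInverse G F) :
    Function.LeftInverse (extFun hι G) (extFun hι F) := by
  intro x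
  induction x using Quot.ind with
  | _ S =>
    show extFun hι G (extFun hι F (pmk S)) = pmk S
    rw [extFun_mk, extFun_mk, preimage_split hι, diff_split]
    have h1 : pmk (prep (G (pmk (prep (F (pmk (ι ⁻¹' S))))))) = pmk (ι ⁻¹' S) := by
      rw [pmk_prep, pmk_prep, hGF]
    rw [pmk_union_left hι h1, repr_split]

theorem ext_extends (hι : Function.Injective ι) {F : PFin ℕ → PFin ℕ} {A A' : Set ℕ}
    (h : F (pmk A) = pmk A') :
    extFun hι F (pmk (ι '' A)) = pmk (ι '' A') := by
  rw [extFun_mk, Set.preimage_image_eq A hι]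
  have h2 : (ι '' A) \ Set.range ι = ∅ :=
    Set.diff_eq_empty.mpr (Set.image_subset_range ι A)
  rw [h2, Set.union_empty]
  have h1 : pmk (prep (F (pmk A))) = pmk A' := by rw [pmk_prep, h]
  rw [pmk_eq] at h1 ⊢
  rw [← Set.image_symmDiff hι]
  exact h1.image ι

theorem ext_isBAAut (hι : Function.Injective ι) {F : PFin ℕ → PFin ℕ}
    (hF : IsBAAut F) : IsBAAut (extFun hι F) := by
  obtain ⟨hbij, hui, hc⟩ := hF
  obtain ⟨G, hGF, hFG⟩ := Function.bijective_iff_has_inverse.mp hbij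
  refine ⟨Function.bijective_iff_has_inverse.mpr
      ⟨extFun hι G, ext_leftInverse hι hGF, ext_leftInverse hι hFG⟩, ?_, ?_⟩
  · intro S T S' T' hS hT
    rw [extFun_mk] at hS hT
    set A' := prep (F (pmk (ι ⁻¹' S))) with hA'
    set B' := prep (F (pmk (ι ⁻¹' T))) with hB'
    have hFA : F (pmk (ι ⁻¹' S)) = pmk A' := (pmk_prep _).symm
    have hFB : F (pmk (ι ⁻¹' T)) = pmk B' := (pmk_prep _).symm
    obtain ⟨hu, hi⟩ := hui _ _ _ _ hFA hFB
    constructor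
    · rw [extFun_mk, Set.preimage_union]
      have h1 : pmk (prep (F (pmk (ι ⁻¹' S ∪ ι ⁻¹' T)))) = pmk (A' ∪ B') := by
        rw [pmk_prep, hu]
      rw [pmk_union_left hι h1, ← split_union]
      exact pmk_union_congr hS hT
    · rw [extFun_mk, Set.preimage_inter]
      have h1 : pmk (prep (F (pmk (ι ⁻¹' S ∩ ι ⁻¹' T)))) = pmk (A' ∩ B') := by
        rw [pmk_prep, hi]
      rw [pmk_union_left hι h1, ← split_inter hι]
      exact pmk_inter_congr hS hT
  · intro S S' hS
    rw [extFun_mk] at hS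
    set A' := prep (F (pmk (ι ⁻¹' S))) with hA'
    have hFA : F (pmk (ι ⁻¹' S)) = pmk A' := (pmk_prep _).symm
    have hcc := hc _ _ hFA
    rw [extFun_mk, Set.preimage_compl]
    have h1 : pmk (prep (F (pmk (ι ⁻¹' S)ᶜ))) = pmk A'ᶜ := by rw [pmk_prep, hcc]
    rw [pmk_union_left hι h1, ← split_compl hι]
    exact pmk_compl_congr hS

end Ext


def iotaK (κ : Cardinal.{0}) (hκ : Cardinal.aleph0 ≤ κ) (n : ℕ) : KType κ :=
  ⟨(n : Ordinal), Set.mem_Iio.mpr (lt_of_lt_of_le (Ordinal.nat_lt_omega0 n)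
    (by rw [← Cardinal.ord_aleph0]; exact Cardinal.ord_le_ord.mpr hκ))⟩
theorem iotaK_injective (κ : Cardinal.{0}) (hκ : Cardinal.aleph0 ≤ κ) :
    Function.Injective (iotaK κ hκ) := by
  intro a b h
  have h2 : ((a : ℕ) : Ordinal) = ((b : ℕ) : Ordinal) := congrArg Subtype.val h
  exact_mod_cast h2
theorem inclSet_eq_image (κ : Cardinal.{0}) (hκ : Cardinal.aleph0 ≤ κ) (A : Set ℕ) :
    inclSet κ A = iotaK κ hκ '' A := by
  ext x
  simp only [inclSet, Set.mem_setOf_eq, Set.mem_image, iotaK, Subtype.ext_iff]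

theorem trivial_transfer (κ : Cardinal.{0}) (hκ : Cardinal.aleph0 ≤ κ)
    {Φ : PFin ℕ → PFin ℕ} {Ψ : PFin (KType κ) → PFin (KType κ)}
    (hΦ : IsBAAut Φ) (hext : Extends κ Φ Ψ) (hΨ : IsTrivialAut Ψ) :
    IsTrivialAut Φ := by
  classical
  set ι := iotaK κ hκ with hιdef
  have hι : Function.Injective ι := iotaK_injective κ hκ
  obtain ⟨e, he⟩ := hΨ
  -- Φ fixes the class of univ
  have hAc : Φ (pmk (∅ : Set ℕ)) = pmk (prep (Φ (pmk ∅))) := (pmk_prep _).symm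
  have huniv : Φ (pmk (Set.univ : Set ℕ)) = pmk Set.univ := by
    have h2 := (hΦ.2.1 ∅ ∅ᶜ _ _ hAc (hΦ.2.2 ∅ _ hAc)).1
    rwa [Set.union_compl_self, Set.union_compl_self] at h2
  -- range ι is preserved modulo finite by e⁻¹
  have hrange : (Set.range ι ∆ (e ⁻¹' Set.range ι)).Finite := by
    have h1 := hext Set.univ Set.univ huniv
    have h2 := (he (inclSet κ Set.univ)).symm.trans h1
    rw [inclSet_eq_image κ hκ, Set.image_univ] at h2
    have := pmk_eq.mp h2
    rwa [symmDiff_comm]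
  set N := {n : ℕ | e (ι n) ∉ Set.range ι} with hNdef
  have hN : N.Finite := by
    apply Set.Finite.of_finite_image (f := ι) _ hι.injOn
    refine hrange.subset ?_
    rintro _ ⟨n, hn, rfl⟩
    rw [Set.mem_symmDiff]
    exact Or.inl ⟨Set.mem_range_self n, hn⟩
  set f : ℕ → ℕ := fun n => if h : ∃ m, ι m = e (ι n) then h.choose else 0 with hfdef
  have hf : ∀ n : ℕ, e (ι n) ∈ Set.range ι → ι (f n) = e (ι n) := by
    intro n hn
    rw [Set.mem_range] at hn
    simp only [hfdef, dif_pos hn]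
    exact hn.choose_spec
  refine ⟨f, fun A => ?_⟩
  set A' := prep (Φ (pmk A)) with hA'def
  have hFA : Φ (pmk A) = pmk A' := (pmk_prep _).symm
  have h2 := (he (inclSet κ A)).symm.trans (hext A A' hFA)
  rw [inclSet_eq_image κ hκ, inclSet_eq_image κ hκ] at h2
  have hd : ((e ⁻¹' (ι '' A)) ∆ (ι '' A')).Finite := pmk_eq.mp h2
  have key : (ι '' A') ∆ (ι '' (f ⁻¹' A)) ⊆ ((e ⁻¹' (ι '' A)) ∆ (ι '' A')) ∪ ι '' N := by
    intro x hx
    by_cases hxr : x ∈ Set.range ι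
    · obtain ⟨n, rfl⟩ := hxr
      by_cases hnN : n ∈ N
      · exact Or.inr ⟨n, hnN, rfl⟩
      · left
        have hne : e (ι n) ∈ Set.range ι := not_not.mp hnN
        have hiff : ι n ∈ ι '' (f ⁻¹' A) ↔ ι n ∈ e ⁻¹' (ι '' A) := by
          rw [hι.mem_set_image, Set.mem_preimage, Set.mem_preimage, ← hf n hne,
            hι.mem_set_image]
        rw [Set.mem_symmDiff] at hx ⊢
        tauto
    · exfalso
      rw [Set.mem_symmDiff] at hx
      rcases hx with ⟨h, -⟩ | ⟨h, -⟩ <;>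
        exact hxr (Set.image_subset_range ι _ h)
  have hfin : ((ι '' A') ∆ (ι '' (f ⁻¹' A))).Finite :=
    ((hd.union (hN.image ι)).subset key)
  rw [← Set.image_symmDiff hι] at hfin
  have : (A' ∆ (f ⁻¹' A)).Finite :=
    Set.Finite.of_finite_image hfin hι.injOn
  exact hFA.trans (pmk_eq.mpr this)

end AutPFinExt

/-- **Proposition.** Let κ be an infinite cardinal.  Every automorphism `Φ` of P(ω)/fin
extends to an automorphism `Ψ` of P(κ)/fin; moreover, if `Φ` is nontrivial then every
automorphism of P(κ)/fin extending `Φ` is nontrivial. -/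

theorem aut_PFin_extends (κ : Cardinal.{0}) (hκ : Cardinal.aleph0 ≤ κ)
    (Φ : PFin ℕ → PFin ℕ) (hΦ : IsBAAut Φ) :
    (∃ Ψ : PFin (KType κ) → PFin (KType κ), IsBAAut Ψ ∧ Extends κ Φ Ψ) ∧
    (¬ IsTrivialAut Φ →
      ∀ Ψ : PFin (KType κ) → PFin (KType κ), IsBAAut Ψ → Extends κ Φ Ψ →
        ¬ IsTrivialAut Ψ) := by
  have hι := AutPFinExt.iotaK_injective κ hκ
  constructor
  · refine ⟨AutPFinExt.extFun hι Φ, AutPFinExt.ext_isBAAut hι hΦ, ?_⟩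
    intro A A' h
    rw [AutPFinExt.inclSet_eq_image κ hκ, AutPFinExt.inclSet_eq_image κ hκ]
    exact AutPFinExt.ext_extends hι h
  · intro hnt Ψ _hΨ hext htriv
    exact hnt (AutPFinExt.trivial_transfer κ hκ hΦ hext htriv)
end
end
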